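/- Let A ∈ ℂ^{m×n}, let p ∈ [1,∞] and let p' be its Hölder dual, 1/p + 1/p' = 1. Let ‖A‖_p denote the operator norm of A as a linear map from (ℂ^n, ℓ_p) to (ℂ^m, ℓ_p), and similarly for ‖A‖_{p'}. Then ‖A‖_p ‖A‖_{p'} ≤ (mn)^{|1/2 − 1/p|} ‖A‖₂², where ‖A‖₂ is the spectral norm. -/

import Mathlib

open scoped ENNReal NNReal
open Finset

lemma sum_rpow_le_rpow_sum' {ι : Type*} (s : Finset ι) (y : ι → ℝ≥0) {t : ℝ} (ht : 1 ≤ t) :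
    ∑ i ∈ s, y i ^ t ≤ (∑ i ∈ s, y i) ^ t := by
  classical
  induction s using Finset.induction with
  | empty => simp [NNReal.zero_rpow (by positivity : t ≠ 0)]
  | insert _ _ h ih =>
      rw [Finset.sum_insert h, Finset.sum_insert h]
      exact le_trans (add_le_add_right ih _) (NNReal.add_rpow_le_rpow_add _ _ ht)

lemma Lp_mono' {k : ℕ} (x : Fin k → ℝ≥0) {a b : ℝ} (ha : 0 < a) (hab : a ≤ b) :
    (∑ i, x i ^ b) ^ (1/b) ≤ (∑ i, x i ^ a) ^ (1/a) := by
  have hb : 0 < b := lt_of_lt_of_le ha hab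
  have h1 : ∑ i, x i ^ b ≤ (∑ i, x i ^ a) ^ (b/a) := by
    calc ∑ i, x i ^ b = ∑ i, (x i ^ a) ^ (b/a) := by
          refine Finset.sum_congr rfl fun i _ => ?_
          rw [← NNReal.rpow_mul, mul_div_cancel₀ _ (ne_of_gt ha)]
      _ ≤ (∑ i, x i ^ a) ^ (b/a) := sum_rpow_le_rpow_sum' _ _ ((one_le_div ha).2 hab)
  calc (∑ i, x i ^ b) ^ (1/b) ≤ ((∑ i, x i ^ a) ^ (b/a)) ^ (1/b) :=
        NNReal.rpow_le_rpow h1 (by positivity)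
    _ = (∑ i, x i ^ a) ^ (1/a) := by
        rw [← NNReal.rpow_mul]; congr 1; field_simp

lemma Lp_compare' {k : ℕ} (x : Fin k → ℝ≥0) {a b : ℝ} (ha : 0 < a) (hab : a ≤ b) :
    (∑ i, x i ^ a) ^ (1/a) ≤ (k : ℝ≥0) ^ (1/a - 1/b) * (∑ i, x i ^ b) ^ (1/b) := by
  have hb : 0 < b := lt_of_lt_of_le ha hab
  rcases eq_or_lt_of_le hab with h | h
  · subst h; simp
  -- Hölder with r = b/a > 1, conjugate r' = r/(r-1)
  have hr : (1:ℝ) < b / a := (one_lt_div ha).2 h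
  have hconj : (b/a).HolderConjugate ((b/a)/(b/a - 1)) := Real.HolderConjugate.conjExponent hr
  have hH := NNReal.inner_le_Lp_mul_Lq (univ : Finset (Fin k)) (fun i => x i ^ a)
      (fun _ => 1) hconj
  simp only [mul_one, NNReal.one_rpow, Finset.sum_const, Finset.card_univ, Fintype.card_fin,
    nsmul_eq_mul, mul_one] at hH
  have h2 : ∑ i, (x i ^ a) ^ (b/a) = ∑ i, x i ^ b := by
    refine Finset.sum_congr rfl fun i _ => ?_
    rw [← NNReal.rpow_mul]; congr 1; field_simp
  rw [h2] at hH
  have h3 := NNReal.rpow_le_rpow hH (le_of_lt (by positivity : (0:ℝ) < 1/a))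
  rw [NNReal.mul_rpow, ← NNReal.rpow_mul, ← NNReal.rpow_mul] at h3
  have e1 : 1 / (b/a) * (1/a) = 1/b := by field_simp
  have e2 : 1 / ((b/a)/(b/a-1)) * (1/a) = 1/a - 1/b := by
    have hne : b/a - 1 ≠ 0 := sub_ne_zero.mpr (ne_of_gt hr)
    field_simp
  rw [e1, e2] at h3
  rw [mul_comm] at h3
  exact h3

lemma toReal_one_div (p : ℝ≥0∞) : (1/p).toReal = 1/p.toReal := by
  rw [one_div, one_div, ENNReal.toReal_inv]

lemma piLp_nnnorm_mono (p q : ℝ≥0∞) [Fact (1 ≤ p)] [Fact (1 ≤ q)] (hpq : p ≤ q)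
    {k : ℕ} (x : Fin k → ℂ) :
    ‖(WithLp.equiv q (Fin k → ℂ)).symm x‖₊ ≤ ‖(WithLp.equiv p (Fin k → ℂ)).symm x‖₊ := by
  have hp1 : (1:ℝ≥0∞) ≤ p := Fact.out
  rcases eq_or_ne q ∞ with hq | hq
  · subst hq
    rcases eq_or_ne p ∞ with hp | hp
    · subst hp; exact le_refl _
    · have hpR : 1 ≤ p.toReal := by
        simpa using ENNReal.toReal_mono hp hp1
      have hpR0 : 0 < p.toReal := lt_of_lt_of_le one_pos hpR
      rw [WithLp.equiv_symm_apply, PiLp.nnnorm_toLp, Pi.nnnorm_def,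
        PiLp.nnnorm_eq_sum hp ((WithLp.equiv p (Fin k → ℂ)).symm x)]
      apply Finset.sup_le
      intro i _
      simp only [WithLp.equiv_symm_apply, WithLp.ofLp_toLp, PiLp.toLp_apply]
      have h1 : ‖x i‖₊ ^ p.toReal ≤ ∑ j, ‖x j‖₊ ^ p.toReal :=
        Finset.single_le_sum (f := fun j => ‖x j‖₊ ^ p.toReal) (fun j _ => zero_le) (Finset.mem_univ i)
      calc ‖x i‖₊ = (‖x i‖₊ ^ p.toReal) ^ (1/p.toReal) := by
            rw [← NNReal.rpow_mul, mul_one_div, div_self (ne_of_gt hpR0), NNReal.rpow_one]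
        _ ≤ (∑ j, ‖x j‖₊ ^ p.toReal) ^ (1/p.toReal) :=
            NNReal.rpow_le_rpow h1 (by positivity)
  · have hp : p ≠ ∞ := fun h => hq (top_le_iff.mp (h ▸ hpq))
    have hpR : 1 ≤ p.toReal := by simpa using ENNReal.toReal_mono hp hp1
    have hab : p.toReal ≤ q.toReal := ENNReal.toReal_mono hq hpq
    rw [PiLp.nnnorm_eq_sum hp, PiLp.nnnorm_eq_sum hq]
    simp only [WithLp.equiv_symm_apply, PiLp.toLp_apply]
    exact Lp_mono' (fun i => ‖x i‖₊) (lt_of_lt_of_le one_pos hpR) hab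

lemma piLp_nnnorm_compare (p q : ℝ≥0∞) [Fact (1 ≤ p)] [Fact (1 ≤ q)] (hpq : p ≤ q)
    {k : ℕ} (x : Fin k → ℂ) :
    ‖(WithLp.equiv p (Fin k → ℂ)).symm x‖₊ ≤
      (k : ℝ≥0) ^ ((1/p).toReal - (1/q).toReal) * ‖(WithLp.equiv q (Fin k → ℂ)).symm x‖₊ := by
  have hp1 : (1:ℝ≥0∞) ≤ p := Fact.out
  rcases eq_or_ne q ∞ with hq | hq
  · subst hq
    rcases eq_or_ne p ∞ with hp | hp
    · subst hp; simp
    · have hpR : 1 ≤ p.toReal := by simpa using ENNReal.toReal_mono hp hp1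
      have hpR0 : 0 < p.toReal := lt_of_lt_of_le one_pos hpR
      rw [WithLp.equiv_symm_apply, PiLp.nnnorm_toLp, Pi.nnnorm_def,
        PiLp.nnnorm_eq_sum hp (WithLp.toLp p x)]
      simp only [WithLp.equiv_symm_apply, WithLp.ofLp_toLp, PiLp.toLp_apply, toReal_one_div, ENNReal.toReal_top, div_zero,
        sub_zero]
      set S := Finset.univ.sup (fun i => ‖x i‖₊) with hS
      have h1 : ∑ j, ‖x j‖₊ ^ p.toReal ≤ (k : ℝ≥0) * S ^ p.toReal := by
        calc ∑ j, ‖x j‖₊ ^ p.toReal ≤ ∑ _j : Fin k, S ^ p.toReal :=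
              Finset.sum_le_sum fun j _ =>
                NNReal.rpow_le_rpow (Finset.le_sup (f := fun i => ‖x i‖₊) (Finset.mem_univ j)) (le_of_lt hpR0)
          _ = (k : ℝ≥0) * S ^ p.toReal := by
              simp [Finset.sum_const, nsmul_eq_mul]
      calc (∑ j, ‖x j‖₊ ^ p.toReal) ^ (1/p.toReal)
          ≤ ((k : ℝ≥0) * S ^ p.toReal) ^ (1/p.toReal) := NNReal.rpow_le_rpow h1 (by positivity)
        _ = (k : ℝ≥0) ^ (1/p.toReal) * S := by
            rw [NNReal.mul_rpow, ← NNReal.rpow_mul, mul_one_div, div_self (ne_of_gt hpR0),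
              NNReal.rpow_one]
  · have hp : p ≠ ∞ := fun h => hq (top_le_iff.mp (h ▸ hpq))
    have hpR : 1 ≤ p.toReal := by simpa using ENNReal.toReal_mono hp hp1
    have hab : p.toReal ≤ q.toReal := ENNReal.toReal_mono hq hpq
    rw [PiLp.nnnorm_eq_sum hp, PiLp.nnnorm_eq_sum hq]
    simp only [WithLp.equiv_symm_apply, PiLp.toLp_apply, toReal_one_div]
    exact Lp_compare' (fun i => ‖x i‖₊) (lt_of_lt_of_le one_pos hpR) hab

open scoped Matrix

/-- The spectral norm (largest singular value): the operator norm of the matrix as a map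
between Euclidean spaces. -/
noncomputable def specNorm {m n : ℕ} (M : Matrix (Fin m) (Fin n) ℂ) : ℝ :=
  ‖LinearMap.toContinuousLinearMap (Matrix.toEuclideanLin M)‖

/-- The induced matrix p-norm: the operator norm of `A` as a linear map
from `(ℂ^n, ℓ_p)` to `(ℂ^m, ℓ_p)`. -/
noncomputable def opNormLp (p : ℝ≥0∞) [Fact (1 ≤ p)] {m n : ℕ}
    (A : Matrix (Fin m) (Fin n) ℂ) : ℝ :=
  ‖LinearMap.toContinuousLinearMap
      ((WithLp.linearEquiv p ℂ (Fin m → ℂ)).symm.toLinearMap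
        ∘ₗ A.mulVecLin
        ∘ₗ (WithLp.linearEquiv p ℂ (Fin n → ℂ)).toLinearMap)‖

lemma piLp_norm_mono (p q : ℝ≥0∞) [Fact (1 ≤ p)] [Fact (1 ≤ q)] (hpq : p ≤ q)
    {k : ℕ} (x : Fin k → ℂ) :
    ‖(WithLp.equiv q (Fin k → ℂ)).symm x‖ ≤ ‖(WithLp.equiv p (Fin k → ℂ)).symm x‖ := by
  exact_mod_cast piLp_nnnorm_mono p q hpq x

lemma piLp_norm_compare (p q : ℝ≥0∞) [Fact (1 ≤ p)] [Fact (1 ≤ q)] (hpq : p ≤ q)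
    {k : ℕ} (x : Fin k → ℂ) :
    ‖(WithLp.equiv p (Fin k → ℂ)).symm x‖ ≤
      (k : ℝ) ^ ((1/p).toReal - (1/q).toReal) * ‖(WithLp.equiv q (Fin k → ℂ)).symm x‖ := by
  exact_mod_cast piLp_nnnorm_compare p q hpq x

lemma euclidean_bound {m n : ℕ} (A : Matrix (Fin m) (Fin n) ℂ) (x : Fin n → ℂ) :
    ‖(WithLp.equiv 2 (Fin m → ℂ)).symm (A.mulVec x)‖ ≤
      specNorm A * ‖(WithLp.equiv 2 (Fin n → ℂ)).symm x‖ := by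
  have h := (LinearMap.toContinuousLinearMap (Matrix.toEuclideanLin A)).le_opNorm
      ((WithLp.equiv 2 (Fin n → ℂ)).symm x)
  simpa [specNorm, Matrix.toEuclideanLin_apply] using h

lemma opNormLp_apply (p : ℝ≥0∞) [Fact (1 ≤ p)] {m n : ℕ} (A : Matrix (Fin m) (Fin n) ℂ)
    (v : PiLp p (fun _ : Fin n => ℂ)) :
    (LinearMap.toContinuousLinearMap
      ((WithLp.linearEquiv p ℂ (Fin m → ℂ)).symm.toLinearMap
        ∘ₗ A.mulVecLin
        ∘ₗ (WithLp.linearEquiv p ℂ (Fin n → ℂ)).toLinearMap)) v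
      = (WithLp.equiv p (Fin m → ℂ)).symm (A.mulVec (WithLp.equiv p (Fin n → ℂ) v)) := rfl

lemma half_eq : ((1 : ℝ≥0∞)/2).toReal = 1/2 := by
  rw [toReal_one_div]; norm_num

lemma opNormLp_le_of_le_two {m n : ℕ} (A : Matrix (Fin m) (Fin n) ℂ) (p : ℝ≥0∞)
    [Fact (1 ≤ p)] (hp : p ≤ 2) :
    opNormLp p A ≤ (m : ℝ) ^ ((1/p).toReal - 1/2) * specNorm A := by
  have hs : (0:ℝ) ≤ specNorm A := norm_nonneg _
  unfold opNormLp
  refine ContinuousLinearMap.opNorm_le_bound _ (by positivity) fun v => ?_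
  rw [opNormLp_apply]
  set x : Fin n → ℂ := WithLp.equiv p (Fin n → ℂ) v with hx
  have hv : v = (WithLp.equiv p (Fin n → ℂ)).symm x := by simp [hx]
  calc ‖(WithLp.equiv p (Fin m → ℂ)).symm (A.mulVec x)‖
      ≤ (m : ℝ) ^ ((1/p).toReal - (1/(2:ℝ≥0∞)).toReal) *
          ‖(WithLp.equiv 2 (Fin m → ℂ)).symm (A.mulVec x)‖ := piLp_norm_compare p 2 hp _
    _ ≤ (m : ℝ) ^ ((1/p).toReal - (1/(2:ℝ≥0∞)).toReal) *
          (specNorm A * ‖(WithLp.equiv 2 (Fin n → ℂ)).symm x‖) := by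
        refine mul_le_mul_of_nonneg_left (euclidean_bound A x) (by positivity)
    _ ≤ (m : ℝ) ^ ((1/p).toReal - (1/(2:ℝ≥0∞)).toReal) *
          (specNorm A * ‖(WithLp.equiv p (Fin n → ℂ)).symm x‖) := by
        refine mul_le_mul_of_nonneg_left (mul_le_mul_of_nonneg_left
          (piLp_norm_mono p 2 hp x) hs) (by positivity)
    _ = (m : ℝ) ^ ((1/p).toReal - 1/2) * specNorm A * ‖v‖ := by
        rw [half_eq, ← hv]; ring

lemma opNormLp_le_of_two_le {m n : ℕ} (A : Matrix (Fin m) (Fin n) ℂ) (p : ℝ≥0∞)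
    [Fact (1 ≤ p)] (hp : 2 ≤ p) :
    opNormLp p A ≤ (n : ℝ) ^ (1/2 - (1/p).toReal) * specNorm A := by
  have hs : (0:ℝ) ≤ specNorm A := norm_nonneg _
  unfold opNormLp
  refine ContinuousLinearMap.opNorm_le_bound _ (by positivity) fun v => ?_
  rw [opNormLp_apply]
  set x : Fin n → ℂ := WithLp.equiv p (Fin n → ℂ) v with hx
  have hv : v = (WithLp.equiv p (Fin n → ℂ)).symm x := by simp [hx]
  calc ‖(WithLp.equiv p (Fin m → ℂ)).symm (A.mulVec x)‖
      ≤ ‖(WithLp.equiv 2 (Fin m → ℂ)).symm (A.mulVec x)‖ := piLp_norm_mono 2 p hp _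
    _ ≤ specNorm A * ‖(WithLp.equiv 2 (Fin n → ℂ)).symm x‖ := euclidean_bound A x
    _ ≤ specNorm A * ((n : ℝ) ^ ((1/(2:ℝ≥0∞)).toReal - (1/p).toReal) *
          ‖(WithLp.equiv p (Fin n → ℂ)).symm x‖) :=
        mul_le_mul_of_nonneg_left (piLp_norm_compare 2 p hp x) hs
    _ = (n : ℝ) ^ (1/2 - (1/p).toReal) * specNorm A * ‖v‖ := by
        rw [half_eq, ← hv]; ring


lemma opNormLp_nonneg (p : ℝ≥0∞) [Fact (1 ≤ p)] {m n : ℕ} (A : Matrix (Fin m) (Fin n) ℂ) :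
    0 ≤ opNormLp p A := by
  unfold opNormLp; exact norm_nonneg _

/-- for Hölder conjugate exponents `p, p'`,
`‖A‖_p ‖A‖_{p'} ≤ (mn)^{|1/2 - 1/p|} ‖A‖₂²`. -/
theorem stmt8 {m n : ℕ} (A : Matrix (Fin m) (Fin n) ℂ)
    (p p' : ℝ≥0∞) [Fact (1 ≤ p)] [Fact (1 ≤ p')]
    (hconj : 1 / p + 1 / p' = 1) :
    opNormLp p A * opNormLp p' A ≤
      ((m : ℝ) * n) ^ |1 / 2 - (1 / p).toReal| * specNorm A ^ 2 := by
  have hs : (0:ℝ) ≤ specNorm A := norm_nonneg _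
  have h1p : 1/p ≠ ∞ :=
    ne_top_of_le_ne_top ENNReal.one_ne_top (le_self_add.trans_eq hconj)
  have h1p' : 1/p' ≠ ∞ :=
    ne_top_of_le_ne_top ENNReal.one_ne_top (le_add_self.trans_eq hconj)
  have hsum : (1/p).toReal + (1/p').toReal = 1 := by
    rw [← ENNReal.toReal_add h1p h1p', hconj, ENNReal.toReal_one]
  have h2ne : ((1:ℝ≥0∞)/2) ≠ ∞ := by
    simp
  rcases le_total p 2 with hp2 | hp2
  · -- p ≤ 2 ≤ p'
    have h2p : (1/2 : ℝ≥0∞) ≤ 1/p := by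
      rw [one_div, one_div]; exact ENNReal.inv_le_inv.mpr hp2
    have hhalf : (1:ℝ)/2 ≤ (1/p).toReal := by
      have := ENNReal.toReal_mono h1p h2p
      rwa [half_eq] at this
    have hp'le : 1/p' ≤ 1/2 := by
      rw [← ENNReal.toReal_le_toReal h1p' h2ne, half_eq]
      linarith
    have hp'2 : (2:ℝ≥0∞) ≤ p' := by
      rw [one_div, one_div] at hp'le
      exact ENNReal.inv_le_inv.mp hp'le
    have b1 := opNormLp_le_of_le_two A p hp2
    have b2 := opNormLp_le_of_two_le A p' hp'2
    have e2 : 1/2 - (1/p').toReal = (1/p).toReal - 1/2 := by linarith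
    rw [e2] at b2
    have habs : |1/2 - (1/p).toReal| = (1/p).toReal - 1/2 := by
      rw [abs_of_nonpos (by linarith)]; ring
    calc opNormLp p A * opNormLp p' A
        ≤ ((m : ℝ) ^ ((1/p).toReal - 1/2) * specNorm A) *
          ((n : ℝ) ^ ((1/p).toReal - 1/2) * specNorm A) :=
          mul_le_mul b1 b2 (opNormLp_nonneg p' A) (by positivity)
      _ = ((m : ℝ) * n) ^ |1/2 - (1/p).toReal| * specNorm A ^ 2 := by
          rw [habs, Real.mul_rpow (Nat.cast_nonneg m) (Nat.cast_nonneg n)]; ring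
  · -- p' ≤ 2 ≤ p
    have h2p : (1/p : ℝ≥0∞) ≤ 1/2 := by
      rw [one_div, one_div]; exact ENNReal.inv_le_inv.mpr hp2
    have hhalf : (1/p).toReal ≤ (1:ℝ)/2 := by
      have := ENNReal.toReal_mono h2ne h2p
      rwa [half_eq] at this
    have hp'le : (1/2 : ℝ≥0∞) ≤ 1/p' := by
      rw [← ENNReal.toReal_le_toReal h2ne h1p', half_eq]
      linarith
    have hp'2 : p' ≤ 2 := by
      rw [one_div, one_div] at hp'le
      exact ENNReal.inv_le_inv.mp hp'le
    have b1 := opNormLp_le_of_two_le A p hp2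
    have b2 := opNormLp_le_of_le_two A p' hp'2
    have e2 : (1/p').toReal - 1/2 = 1/2 - (1/p).toReal := by linarith
    rw [e2] at b2
    have habs : |1/2 - (1/p).toReal| = 1/2 - (1/p).toReal := abs_of_nonneg (by linarith)
    calc opNormLp p A * opNormLp p' A
        ≤ ((n : ℝ) ^ (1/2 - (1/p).toReal) * specNorm A) *
          ((m : ℝ) ^ (1/2 - (1/p).toReal) * specNorm A) :=
          mul_le_mul b1 b2 (opNormLp_nonneg p' A) (by positivity)
      _ = ((m : ℝ) * n) ^ |1/2 - (1/p).toReal| * specNorm A ^ 2 := by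
          rw [habs, Real.mul_rpow (Nat.cast_nonneg m) (Nat.cast_nonneg n)]; ring
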